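/- Let α : V × V → Λ be a symmetric bilinear map satisfying ⟨α(X,Y),w⟩ = −(X,Y) for all X,Y ∈ V, and assume the associated bilinear map β is flat. Then S(β) = U₀ ⊕ U₀, where U₀ is the image of S(β) under the projection of W = Λ ⊕ Λ onto its first factor. -/

import Mathlib

open Module

/-- If ⟨α(X,Y),w⟩ = −(X,Y) and β is flat, then S(β) = U₀ ⊕ U₀. -/
theorem stmt_4
    (n p : ℕ) (hn : 1 ≤ n) (hp : 2 ≤ p)
    {V : Type} [AddCommGroup V] [Module ℝ V] [FiniteDimensional ℝ V]
    (hV : finrank ℝ V = 2 * n)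
    (J : V →ₗ[ℝ] V) (hJ : ∀ X, J (J X) = -X)
    {Λ : Type} [AddCommGroup Λ] [Module ℝ Λ] [FiniteDimensional ℝ Λ]
    (hΛ : finrank ℝ Λ = p)
    (ip : LinearMap.BilinForm ℝ Λ) (hipsymm : ∀ ξ η, ip ξ η = ip η ξ)
    (e : Basis (Fin p) ℝ Λ)
    (he : ∀ i j, ip (e i) (e j) =
      if i = j then (if (i : ℕ) = 0 then (-1 : ℝ) else 1) else 0)
    (g : LinearMap.BilinForm ℝ V) (hgsymm : ∀ X Y, g X Y = g Y X)
    (hgpos : ∀ X : V, X ≠ 0 → 0 < g X X)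
    (hgJ : ∀ X Y, g (J X) (J Y) = g X Y)
    (α : V →ₗ[ℝ] V →ₗ[ℝ] Λ) (hαsymm : ∀ X Y, α X Y = α Y X)
    (w : Λ) (hw0 : w ≠ 0) (hww : ip w w = 0)
    (hαw : ∀ X Y, ip (α X Y) w = - g X Y)
    (bW : LinearMap.BilinForm ℝ (Λ × Λ))
    (hbW : ∀ ξ η, bW ξ η = ip ξ.1 η.1 - ip ξ.2 η.2)
    (β : V → V → Λ × Λ)
    (hβ : ∀ X Y, β X Y = (α X Y + α (J X) (J Y), α X (J Y) - α (J X) Y))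
    (hflat : ∀ X Y Z T, bW (β X Y) (β Z T) = bW (β X T) (β Z Y))
    (Sβ : Submodule ℝ (Λ × Λ))
    (hSβ : Sβ = Submodule.span ℝ {z : Λ × Λ | ∃ X Y, z = β X Y})
    (U₀ : Submodule ℝ Λ)
    (hU₀ : U₀ = Submodule.map (LinearMap.fst ℝ Λ Λ) Sβ) :
    Sβ = U₀.prod U₀ := by
  classical
  -- the two symmetries of Sβ
  set Tm : Λ × Λ →ₗ[ℝ] Λ × Λ :=
    LinearMap.prod (-(LinearMap.snd ℝ Λ Λ)) (LinearMap.fst ℝ Λ Λ) with hTm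
  set Cm : Λ × Λ →ₗ[ℝ] Λ × Λ :=
    LinearMap.prod (LinearMap.fst ℝ Λ Λ) (-(LinearMap.snd ℝ Λ Λ)) with hCm
  have hTβ : ∀ X Y, Tm (β X Y) = β (J X) Y := by
    intro X Y
    simp only [hTm, hβ, LinearMap.prod_apply, Function.prod, LinearMap.neg_apply,
      LinearMap.snd_apply, LinearMap.fst_apply, hJ, map_neg]
    rw [Prod.mk.injEq]
    constructor <;> abel
  have hCβ : ∀ X Y, Cm (β X Y) = β Y X := by
    intro X Y
    simp only [hCm, hβ, LinearMap.prod_apply, Function.prod, LinearMap.neg_apply,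
      LinearMap.snd_apply, LinearMap.fst_apply]
    rw [Prod.mk.injEq]
    constructor
    · rw [hαsymm X Y, hαsymm (J X) (J Y)]
    · rw [hαsymm X (J Y), hαsymm (J X) Y]; abel
  have hTS : ∀ z ∈ Sβ, Tm z ∈ Sβ := by
    intro z hz
    have hle : Sβ.map Tm ≤ Sβ := by
      rw [hSβ, Submodule.map_span, Submodule.span_le]
      rintro _ ⟨_, ⟨X, Y, rfl⟩, rfl⟩
      exact Submodule.subset_span ⟨J X, Y, hTβ X Y⟩
    exact hle ⟨z, hz, rfl⟩
  have hCS : ∀ z ∈ Sβ, Cm z ∈ Sβ := by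
    intro z hz
    have hle : Sβ.map Cm ≤ Sβ := by
      rw [hSβ, Submodule.map_span, Submodule.span_le]
      rintro _ ⟨_, ⟨X, Y, rfl⟩, rfl⟩
      exact Submodule.subset_span ⟨Y, X, hCβ X Y⟩
    exact hle ⟨z, hz, rfl⟩
  -- from (a,b) ∈ Sβ we get (a,0) ∈ Sβ
  have hfst : ∀ z ∈ Sβ, ((z.1, 0) : Λ × Λ) ∈ Sβ := by
    intro z hz
    have h2 : Cm z ∈ Sβ := hCS z hz
    have hmem : ((2⁻¹ : ℝ)) • (z + Cm z) ∈ Sβ :=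
      Sβ.smul_mem _ (Sβ.add_mem hz h2)
    have hCz : Cm z = (z.1, -z.2) := rfl
    have heq : ((z.1, 0) : Λ × Λ) = (2⁻¹ : ℝ) • (z + Cm z) := by
      rw [hCz]
      have hz' : z = (z.1, z.2) := rfl
      rw [hz', Prod.mk_add_mk, Prod.smul_mk, Prod.mk.injEq]
      constructor
      · rw [← two_smul ℝ z.1, smul_smul]; norm_num
      · rw [add_neg_cancel, smul_zero]
    rw [heq]; exact hmem
  -- membership of (a,0) and (0,a) for a ∈ U₀
  have hU₀mem : ∀ a ∈ U₀, ((a, 0) : Λ × Λ) ∈ Sβ := by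
    intro a ha
    rw [hU₀] at ha
    obtain ⟨z, hz, rfl⟩ := ha
    exact hfst z hz
  have hU₀mem' : ∀ a ∈ U₀, ((0, a) : Λ × Λ) ∈ Sβ := by
    intro a ha
    have h1 : ((a, 0) : Λ × Λ) ∈ Sβ := hU₀mem a ha
    have h2 : Tm ((a, 0) : Λ × Λ) = (0, a) := by
      simp only [hTm, LinearMap.prod_apply, Function.prod, LinearMap.neg_apply,
        LinearMap.snd_apply, LinearMap.fst_apply, neg_zero]
    rw [← h2]; exact hTS _ h1
  apply le_antisymm
  · intro z hz
    rw [Submodule.mem_prod]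
    constructor
    · rw [hU₀]; exact ⟨z, hz, rfl⟩
    · have h1 : Tm z ∈ Sβ := hTS z hz
      have h2 : -z.2 ∈ U₀ := by rw [hU₀]; exact ⟨Tm z, h1, rfl⟩
      simpa using U₀.neg_mem h2
  · intro z hz
    rw [Submodule.mem_prod] at hz
    have h1 : ((z.1, 0) : Λ × Λ) ∈ Sβ := hU₀mem z.1 hz.1
    have h2 : ((0, z.2) : Λ × Λ) ∈ Sβ := hU₀mem' z.2 hz.2
    have : z = ((z.1, 0) : Λ × Λ) + (0, z.2) := by
      rw [Prod.mk_add_mk, add_zero, zero_add]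
    rw [this]; exact Sβ.add_mem h1 h2
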